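/- Let n and x be natural numbers with x ≤ n. Then for every real number a, Σ_{r=0}^{n−x} C(n+3, n−x−r) C(x+r, r) (−1)^r a^r = Σ_{k=0}^{n−x} C(n+3, k) C(n−x−k+2, 2) a^{n−x−k} (1 − a)^k. In particular, for every a with 0 < a < 1 the sum H(a) = Σ_{r=0}^{n−x} C(n+3, n−x−r) C(x+r, r) (−1)^r a^r is strictly positive. -/

import Mathlib

open Finset

/-- Partial alternating sum of binomial coefficients. -/
lemma alt_sum_choose (M : ℕ) : ∀ r : ℕ,
    ∑ j ∈ range (r + 1), (-1 : ℝ) ^ j * ((M + 1).choose j : ℝ)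
      = (-1) ^ r * (M.choose r : ℝ) := by
  intro r
  induction r with
  | zero => simp
  | succ r ih =>
    rw [Finset.sum_range_succ, ih, Nat.choose_succ_succ M r]
    push_cast
    ring

lemma alt_sum_choose_lin (M : ℕ) : ∀ r : ℕ,
    ∑ j ∈ range (r + 1), (-1 : ℝ) ^ j * ((M + 2).choose j : ℝ) * ((r - j + 1 : ℕ) : ℝ)
      = (-1) ^ r * (M.choose r : ℝ) := by
  intro r
  induction r with
  | zero => simp
  | succ r ih =>
    rw [Finset.sum_range_succ]
    have hsplit : ∀ j ∈ range (r + 1),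
        (-1 : ℝ) ^ j * ((M + 2).choose j : ℝ) * ((r + 1 - j + 1 : ℕ) : ℝ)
          = (-1 : ℝ) ^ j * ((M + 2).choose j : ℝ) * ((r - j + 1 : ℕ) : ℝ)
            + (-1 : ℝ) ^ j * (((M + 1) + 1).choose j : ℝ) := by
      intro j hj
      rw [mem_range] at hj
      have h1 : r + 1 - j + 1 = (r - j + 1) + 1 := by omega
      rw [h1]
      push_cast
      ring
    rw [Finset.sum_congr rfl hsplit, Finset.sum_add_distrib, ih,
      alt_sum_choose (M + 1) r]
    have h2 : r + 1 - (r + 1) + 1 = 1 := by omega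
    rw [h2]
    have p1 : ((M + 2).choose (r + 1) : ℝ) = (M + 1).choose r + (M + 1).choose (r + 1) := by
      rw [Nat.choose_succ_succ (M + 1) r]; push_cast; ring
    have p2 : ((M + 1).choose (r + 1) : ℝ) = M.choose r + M.choose (r + 1) := by
      rw [Nat.choose_succ_succ M r]; push_cast; ring
    rw [p1, p2]
    push_cast
    ring

lemma alt_sum_choose_two (M : ℕ) : ∀ r : ℕ,
    ∑ j ∈ range (r + 1), (-1 : ℝ) ^ j * ((M + 3).choose j : ℝ) * (((r - j + 2).choose 2 : ℕ) : ℝ)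
      = (-1) ^ r * (M.choose r : ℝ) := by
  intro r
  induction r with
  | zero => simp
  | succ r ih =>
    rw [Finset.sum_range_succ]
    have hsplit : ∀ j ∈ range (r + 1),
        (-1 : ℝ) ^ j * ((M + 3).choose j : ℝ) * (((r + 1 - j + 2).choose 2 : ℕ) : ℝ)
          = (-1 : ℝ) ^ j * ((M + 3).choose j : ℝ) * (((r - j + 2).choose 2 : ℕ) : ℝ)
            + ((-1 : ℝ) ^ j * (((M + 1) + 2).choose j : ℝ) * ((r - j + 1 : ℕ) : ℝ)
              + (-1 : ℝ) ^ j * (((M + 2) + 1).choose j : ℝ)) := by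
      intro j hj
      rw [mem_range] at hj
      have h1 : r + 1 - j + 2 = (r - j + 2) + 1 := by omega
      have h2 : ((r - j + 2) + 1).choose 2 = (r - j + 2).choose 1 + (r - j + 2).choose 2 := by
        have := Nat.choose_succ_succ' (r - j + 2) 1
        simpa using this
      rw [h1, h2, Nat.choose_one_right]
      have h3 : r - j + 2 = (r - j + 1) + 1 := by omega
      rw [h3]
      push_cast
      ring
    rw [Finset.sum_congr rfl hsplit, Finset.sum_add_distrib, Finset.sum_add_distrib, ih,
      alt_sum_choose_lin (M + 1) r, alt_sum_choose (M + 2) r]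
    have h2 : r + 1 - (r + 1) + 2 = 2 := by omega
    rw [h2, Nat.choose_self]
    have p1 : ((M + 3).choose (r + 1) : ℝ)
        = (M + 2).choose r + ((M + 1).choose r + (M.choose r + M.choose (r + 1))) := by
      rw [Nat.choose_succ_succ (M + 2) r, Nat.choose_succ_succ (M + 1) r,
        Nat.choose_succ_succ M r]
      push_cast; ring
    rw [p1]
    push_cast
    ring

/-- Coefficient identity. -/
lemma coef_identity (x m r : ℕ) (hr : r ≤ m) :
    ∑ j ∈ range (r + 1),
        (-1 : ℝ) ^ j * ((x + m + 3).choose (m - r + j) : ℝ)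
          * ((m - (m - r + j) + 2).choose 2 : ℝ) * ((m - r + j).choose j : ℝ)
      = (-1) ^ r * ((x + m + 3).choose (m - r) : ℝ) * ((x + r).choose r : ℝ) := by
  have key : ∀ j ∈ range (r + 1),
      (-1 : ℝ) ^ j * ((x + m + 3).choose (m - r + j) : ℝ)
          * ((m - (m - r + j) + 2).choose 2 : ℝ) * ((m - r + j).choose j : ℝ)
        = ((x + m + 3).choose (m - r) : ℝ)
          * ((-1 : ℝ) ^ j * (((x + r) + 3).choose j : ℝ) * (((r - j + 2).choose 2 : ℕ) : ℝ)) := by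
    intro j hj
    rw [mem_range] at hj
    have hj' : j ≤ r := by omega
    have h1 : m - (m - r + j) = r - j := by omega
    have h2 : ((m - r + j).choose j : ℕ) = (m - r + j).choose (m - r) := by
      have := Nat.choose_symm (Nat.le_add_right (m - r) j)
      rwa [Nat.add_sub_cancel_left] at this
    have h3 : (x + m + 3).choose (m - r + j) * (m - r + j).choose (m - r)
        = (x + m + 3).choose (m - r) * ((x + m + 3) - (m - r)).choose ((m - r + j) - (m - r)) :=
      Nat.choose_mul (by omega)
    have h4 : (x + m + 3) - (m - r) = (x + r) + 3 := by omega
    have h5 : (m - r + j) - (m - r) = j := by omega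
    rw [h1]
    have h6 : ((x + m + 3).choose (m - r + j) : ℝ) * ((m - r + j).choose j : ℝ)
        = ((x + m + 3).choose (m - r) : ℝ) * (((x + r) + 3).choose j : ℝ) := by
      rw [← Nat.cast_mul, ← Nat.cast_mul, h2, h3, h4, h5]
    calc (-1 : ℝ) ^ j * ((x + m + 3).choose (m - r + j) : ℝ)
          * ((r - j + 2).choose 2 : ℝ) * ((m - r + j).choose j : ℝ)
        = (((x + m + 3).choose (m - r + j) : ℝ) * ((m - r + j).choose j : ℝ))
            * ((-1 : ℝ) ^ j * ((r - j + 2).choose 2 : ℝ)) := by ring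
      _ = (((x + m + 3).choose (m - r) : ℝ) * (((x + r) + 3).choose j : ℝ))
            * ((-1 : ℝ) ^ j * ((r - j + 2).choose 2 : ℝ)) := by rw [h6]
      _ = ((x + m + 3).choose (m - r) : ℝ)
          * ((-1 : ℝ) ^ j * (((x + r) + 3).choose j : ℝ) * (((r - j + 2).choose 2 : ℕ) : ℝ)) := by
          ring
  rw [Finset.sum_congr rfl key, ← Finset.mul_sum, alt_sum_choose_two (x + r) r]
  ring

/-- The main expansion identity, with `m = n - x` abstracted. -/
lemma H_expansion (x m : ℕ) (a : ℝ) :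
    ∑ r ∈ range (m + 1),
        ((x + m + 3).choose (m - r) : ℝ) * ((x + r).choose r : ℝ) * (-1) ^ r * a ^ r
      = ∑ k ∈ range (m + 1),
        ((x + m + 3).choose k : ℝ) * ((m - k + 2).choose 2 : ℝ)
          * a ^ (m - k) * (1 - a) ^ k := by
  -- expand (1-a)^k
  have expand : ∀ k ∈ range (m + 1),
      ((x + m + 3).choose k : ℝ) * ((m - k + 2).choose 2 : ℝ) * a ^ (m - k) * (1 - a) ^ k
        = ∑ i ∈ range (k + 1),
            ((x + m + 3).choose k : ℝ) * ((m - k + 2).choose 2 : ℝ) * a ^ (m - k)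
              * ((-a) ^ i * (1 : ℝ) ^ (k - i) * (k.choose i : ℝ)) := by
    intro k _
    rw [← Finset.mul_sum]
    congr 1
    have : (1 : ℝ) - a = -a + 1 := by ring
    rw [this, add_pow]
  rw [Finset.sum_congr rfl expand]
  -- reindex the double sum
  rw [Finset.sum_sigma']
  rw [show ∑ r ∈ range (m + 1),
        ((x + m + 3).choose (m - r) : ℝ) * ((x + r).choose r : ℝ) * (-1) ^ r * a ^ r
      = ∑ p ∈ (range (m + 1)).sigma (fun r => range (r + 1)),
          ((x + m + 3).choose (m - p.1 + p.2) : ℝ)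
            * ((m - (m - p.1 + p.2) + 2).choose 2 : ℝ) * a ^ (m - (m - p.1 + p.2))
            * ((-a) ^ p.2 * (1 : ℝ) ^ ((m - p.1 + p.2) - p.2)
              * ((m - p.1 + p.2).choose p.2 : ℝ)) from ?_]
  · refine Finset.sum_nbij' (i := fun p => ⟨m - p.1 + p.2, p.2⟩)
      (j := fun p => ⟨m - p.1 + p.2, p.2⟩) ?_ ?_ ?_ ?_ ?_
    · intro p hp
      simp only [mem_sigma, mem_range] at hp ⊢
      omega
    · intro p hp
      simp only [mem_sigma, mem_range] at hp ⊢
      omega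
    · intro p hp
      simp only [mem_sigma, mem_range] at hp
      ext <;> simp <;> omega
    · intro p hp
      simp only [mem_sigma, mem_range] at hp
      ext <;> simp <;> omega
    · intro p hp
      rfl
  · -- now prove the per-r identity
    rw [Finset.sum_sigma]
    refine Finset.sum_congr rfl ?_
    intro r hr
    rw [mem_range] at hr
    have hr' : r ≤ m := by omega
    have inner : ∀ j ∈ range (r + 1),
        ((x + m + 3).choose (m - r + j) : ℝ)
            * ((m - (m - r + j) + 2).choose 2 : ℝ) * a ^ (m - (m - r + j))
            * ((-a) ^ j * (1 : ℝ) ^ ((m - r + j) - j) * ((m - r + j).choose j : ℝ))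
          = ((-1 : ℝ) ^ j * ((x + m + 3).choose (m - r + j) : ℝ)
              * ((m - (m - r + j) + 2).choose 2 : ℝ) * ((m - r + j).choose j : ℝ)) * a ^ r := by
      intro j hj
      rw [mem_range] at hj
      have h1 : m - (m - r + j) = r - j := by omega
      have h2 : (-a) ^ j = (-1 : ℝ) ^ j * a ^ j := by rw [neg_pow]
      have h3 : a ^ (r - j) * a ^ j = a ^ r := by
        rw [← pow_add]
        congr 1
        omega
      rw [h1, h2, one_pow, mul_one]
      calc ((x + m + 3).choose (m - r + j) : ℝ) * ((r - j + 2).choose 2 : ℝ) * a ^ (r - j)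
            * ((-1 : ℝ) ^ j * a ^ j * ((m - r + j).choose j : ℝ))
          = ((-1 : ℝ) ^ j * ((x + m + 3).choose (m - r + j) : ℝ)
              * ((r - j + 2).choose 2 : ℝ) * ((m - r + j).choose j : ℝ))
            * (a ^ (r - j) * a ^ j) := by ring
        _ = _ := by rw [h3]
    rw [Finset.sum_congr rfl inner, ← Finset.sum_mul, coef_identity x m r hr']
    ring

theorem H_expansion_and_pos (n x : ℕ) (hx : x ≤ n) :
    (∀ a : ℝ, ∑ r ∈ Finset.range (n - x + 1),
        ((n + 3).choose (n - x - r) : ℝ) * ((x + r).choose r : ℝ) * (-1) ^ r * a ^ r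
      = ∑ k ∈ Finset.range (n - x + 1),
        ((n + 3).choose k : ℝ) * ((n - x - k + 2).choose 2 : ℝ)
          * a ^ (n - x - k) * (1 - a) ^ k) ∧
    (∀ a : ℝ, a ∈ Set.Ioo (0 : ℝ) 1 →
      0 < ∑ r ∈ Finset.range (n - x + 1),
        ((n + 3).choose (n - x - r) : ℝ) * ((x + r).choose r : ℝ) * (-1) ^ r * a ^ r) := by
  have hn : n + 3 = x + (n - x) + 3 := by omega
  have hmain : ∀ a : ℝ, ∑ r ∈ Finset.range (n - x + 1),
      ((n + 3).choose (n - x - r) : ℝ) * ((x + r).choose r : ℝ) * (-1) ^ r * a ^ r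
    = ∑ k ∈ Finset.range (n - x + 1),
      ((n + 3).choose k : ℝ) * ((n - x - k + 2).choose 2 : ℝ)
        * a ^ (n - x - k) * (1 - a) ^ k := by
    intro a
    rw [hn]
    exact H_expansion x (n - x) a
  refine ⟨hmain, fun a ha => ?_⟩
  obtain ⟨ha0, ha1⟩ := ha
  rw [hmain a]
  apply Finset.sum_pos'
  · intro k hk
    rw [Finset.mem_range] at hk
    have : (0 : ℝ) < 1 - a := by linarith
    positivity
  · refine ⟨0, Finset.mem_range.mpr (by omega), ?_⟩
    have h1 : (0 : ℝ) < 1 - a := by linarith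
    have h2 : 0 < (n + 3).choose 0 := Nat.choose_pos (by omega)
    have h3 : 0 < (n - x - 0 + 2).choose 2 := Nat.choose_pos (by omega)
    positivity
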